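/- Let N be a positive integer, R ≤ N, and let C and D be real N×N matrices partitioned into blocks C = [[C₁₁,C₁₂],[C₂₁,C₂₂]], D = [[D₁₁,D₁₂],[D₂₁,D₂₂]] with C₁₁ of size R×R. Assume: (i) M := C₁₁ is invertible; (ii) C₂₂ = C₂₁M⁻¹C₁₂ (so C has rank R); (iii) DᵀC = CᵀD; (iv) the (N−R)×(N−R) matrix D₂₁M⁻¹C₁₂ − D₂₂ is invertible. Then, with Q₀ := C₂₁M⁻¹, there exist an invertible real N×N matrix T and a symmetric real R×R matrix X₀ such that CT = [[I,0],[Q₀,0]] and DT = [[X₀,−Q₀ᵀ],[0,I]], where the identity blocks are of sizes R×R and (N−R)×(N−R) respectively. -/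

import Mathlib

open Matrix

/-- Paper's Lemma 1: matrices `C` (of rank `R`, with invertible upper-left block `M`)
and `D` satisfying the symmetry condition `DᵀC = CᵀD` and the nonsingularity condition
`D₂₁M⁻¹C₁₂ - D₂₂` invertible can be brought, by right multiplication with a single
invertible matrix `T`, to canonical forms `CT = [[I,0],[Q₀,0]]`,
`DT = [[X₀,-Q₀ᵀ],[0,I]]` with `Q₀ = C₂₁M⁻¹` and `X₀` symmetric. -/
theorem lemma1_canonical_forms
    (N R : ℕ) (hN : 0 < N) (hR : R ≤ N)
    (C D : Matrix (Fin R ⊕ Fin (N - R)) (Fin R ⊕ Fin (N - R)) ℝ)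
    (hM : IsUnit C.toBlocks₁₁)
    (hrank : C.toBlocks₂₂ = C.toBlocks₂₁ * (C.toBlocks₁₁)⁻¹ * C.toBlocks₁₂)
    (hsym : Dᵀ * C = Cᵀ * D)
    (hns : IsUnit (D.toBlocks₂₁ * (C.toBlocks₁₁)⁻¹ * C.toBlocks₁₂ - D.toBlocks₂₂)) :
    ∃ (T : Matrix (Fin R ⊕ Fin (N - R)) (Fin R ⊕ Fin (N - R)) ℝ)
      (X₀ : Matrix (Fin R) (Fin R) ℝ),
      IsUnit T ∧ X₀.IsSymm ∧
      C * T = fromBlocks 1 0 (C.toBlocks₂₁ * (C.toBlocks₁₁)⁻¹) 0 ∧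
      D * T = fromBlocks X₀ (-(C.toBlocks₂₁ * (C.toBlocks₁₁)⁻¹)ᵀ) 0 1 := by
  have hMd := (Matrix.isUnit_iff_isUnit_det _).mp hM
  have hSd := (Matrix.isUnit_iff_isUnit_det _).mp hns
  set M := C.toBlocks₁₁ with hMdef
  set S := D.toBlocks₂₁ * M⁻¹ * C.toBlocks₁₂ - D.toBlocks₂₂ with hSdef
  have hM1 : M * M⁻¹ = 1 := mul_nonsing_inv M hMd
  have hM2 : M⁻¹ * M = 1 := nonsing_inv_mul M hMd
  have hS1 : S * S⁻¹ = 1 := mul_nonsing_inv S hSd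
  have hS2 : S⁻¹ * S = 1 := nonsing_inv_mul S hSd
  set Q := C.toBlocks₂₁ * M⁻¹ with hQdef
  set A := D.toBlocks₁₁ * M⁻¹ with hAdef
  set B := D.toBlocks₁₂ - D.toBlocks₁₁ * M⁻¹ * C.toBlocks₁₂ with hBdef
  set E := D.toBlocks₂₁ * M⁻¹ with hEdef
  set T₁ : Matrix (Fin R ⊕ Fin (N - R)) (Fin R ⊕ Fin (N - R)) ℝ :=
    fromBlocks M⁻¹ (-(M⁻¹ * C.toBlocks₁₂)) 0 1 with hT₁def
  set T₂ : Matrix (Fin R ⊕ Fin (N - R)) (Fin R ⊕ Fin (N - R)) ℝ :=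
    fromBlocks 1 0 (S⁻¹ * E) (-S⁻¹) with hT₂def
  have hCT₁ : C * T₁ = fromBlocks 1 0 Q 0 := by
    conv_lhs => rw [← fromBlocks_toBlocks C]
    rw [hT₁def, fromBlocks_multiply, fromBlocks_inj]
    refine ⟨?_, ?_, ?_, ?_⟩
    · simp; exact hM1
    · simp only [Matrix.mul_neg, ← Matrix.mul_assoc, Matrix.mul_zero, add_zero,
        Matrix.mul_one, ← hMdef, hM1, Matrix.one_mul]
      exact neg_add_cancel _
    · simp [hQdef]
    · simp only [Matrix.mul_neg, ← Matrix.mul_assoc, Matrix.mul_zero, add_zero,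
        Matrix.mul_one, hrank, hQdef]
      exact neg_add_cancel _
  have hDT₁ : D * T₁ = fromBlocks A B E (-S) := by
    conv_lhs => rw [← fromBlocks_toBlocks D]
    rw [hT₁def, fromBlocks_multiply, fromBlocks_inj]
    refine ⟨?_, ?_, ?_, ?_⟩
    · simp [hAdef]
    · simp only [hBdef, Matrix.mul_neg, ← Matrix.mul_assoc, Matrix.mul_zero, zero_add,
        Matrix.mul_one, add_zero, sub_eq_add_neg]
      try exact add_comm _ _
    · simp [hEdef]
    · simp only [hSdef, hEdef, Matrix.mul_neg, ← Matrix.mul_assoc, Matrix.mul_zero, zero_add,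
        Matrix.mul_one, add_zero, neg_sub, sub_eq_add_neg, neg_add, neg_neg]
      try exact add_comm _ _
  have hsym' : (fromBlocks A B E (-S))ᵀ * fromBlocks 1 0 Q 0
      = (fromBlocks 1 0 Q 0)ᵀ * fromBlocks A B E (-S) := by
    rw [← hCT₁, ← hDT₁, Matrix.transpose_mul, Matrix.transpose_mul, Matrix.mul_assoc,
      Matrix.mul_assoc, ← Matrix.mul_assoc Dᵀ, ← Matrix.mul_assoc Cᵀ, hsym]
  rw [fromBlocks_transpose, fromBlocks_transpose, fromBlocks_multiply,
    fromBlocks_multiply] at hsym'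
  have e11 := congrArg Matrix.toBlocks₁₁ hsym'
  have e12 := congrArg Matrix.toBlocks₁₂ hsym'
  simp only [toBlocks_fromBlocks₁₁, toBlocks_fromBlocks₁₂, Matrix.mul_one, Matrix.one_mul,
    Matrix.mul_zero, Matrix.zero_mul, add_zero, zero_add, Matrix.mul_neg,
    Matrix.transpose_neg, Matrix.transpose_one] at e11 e12
  have hB : B = Qᵀ * S := by
    have := e12.symm
    rwa [add_neg_eq_zero] at this
  refine ⟨T₁ * T₂, A + Qᵀ * E, ?_, ?_, ?_, ?_⟩
  · -- IsUnit
    have hT₂inv : T₂ * fromBlocks 1 0 E (-S) = 1 := by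
      rw [hT₂def, fromBlocks_multiply, ← fromBlocks_one, fromBlocks_inj]
      refine ⟨by simp, by simp, ?_, ?_⟩
      · simp [Matrix.neg_mul]
      · simp [Matrix.neg_mul, Matrix.mul_neg, hS2]
    have hT₁inv : T₁ * fromBlocks M C.toBlocks₁₂ 0 1 = 1 := by
      rw [hT₁def, fromBlocks_multiply, ← fromBlocks_one, fromBlocks_inj]
      refine ⟨by simp [hM2], ?_, by simp, by simp⟩
      simp only [Matrix.neg_mul, Matrix.mul_zero, Matrix.mul_one, add_zero, zero_add,
        ← Matrix.mul_assoc, hM2, Matrix.one_mul]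
      exact add_neg_cancel _
    have key : (T₁ * T₂) * (fromBlocks 1 0 E (-S) * fromBlocks M C.toBlocks₁₂ 0 1) = 1 := by
      rw [Matrix.mul_assoc, ← Matrix.mul_assoc T₂, hT₂inv, Matrix.one_mul, hT₁inv]
    have hdet : (T₁ * T₂).det * (fromBlocks 1 0 E (-S) * fromBlocks M C.toBlocks₁₂ 0 1).det = 1 := by
      rw [← det_mul, key, det_one]
    exact (Matrix.isUnit_iff_isUnit_det _).mpr (IsUnit.of_mul_eq_one _ hdet)
  · -- symmetry
    show (A + Qᵀ * E)ᵀ = A + Qᵀ * E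
    rw [transpose_add, Matrix.transpose_mul Qᵀ E, transpose_transpose]
    exact e11
  · -- C * T
    rw [← Matrix.mul_assoc, hCT₁, hT₂def, fromBlocks_multiply, fromBlocks_inj]
    exact ⟨by simp, by simp, by simp, by simp⟩
  · -- D * T
    rw [← Matrix.mul_assoc, hDT₁, hT₂def, fromBlocks_multiply, fromBlocks_inj]
    refine ⟨?_, ?_, ?_, ?_⟩
    · rw [hB, Matrix.mul_one, Matrix.mul_assoc Qᵀ, ← Matrix.mul_assoc S, hS1, Matrix.one_mul]
    · rw [hB, Matrix.mul_zero, zero_add, Matrix.mul_neg, Matrix.mul_assoc, hS1, Matrix.mul_one]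
    · rw [Matrix.mul_one, Matrix.neg_mul, ← Matrix.mul_assoc, hS1, Matrix.one_mul, add_neg_cancel]
    · rw [Matrix.mul_zero, zero_add, neg_mul_neg, hS1]
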